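/- Let n ≥ 3 be an odd integer and let A be an n×n real symmetric matrix with entries a_{ij} > 0 whenever i - j ≡ ±1 (mod n) and a_{ij} = 0 otherwise. Then det A = 2 · ∏_{i=1}^{n} a_{i,i+1} (indices mod n), which is positive; in particular A is nonsingular. -/

import Mathlib

/-- For odd `n ≥ 3` and a real symmetric `n × n` matrix whose support is exactly the
adjacency pattern of the `n`-cycle (positive entries on cycle edges, zero elsewhere),
the determinant equals `2 · ∏ i, a_{i,i+1}`, which is positive; in particular `A` is
nonsingular. -/
theorem cycle_pattern_det (n : ℕ) [NeZero n] (hn : 3 ≤ n) (hodd : Odd n)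
    (A : Matrix (ZMod n) (ZMod n) ℝ) (hsymm : A.IsSymm)
    (hpos : ∀ i j : ZMod n, (j = i + 1 ∨ j = i - 1) → 0 < A i j)
    (hzero : ∀ i j : ZMod n, ¬(j = i + 1 ∨ j = i - 1) → A i j = 0) :
    A.det = 2 * ∏ i : ZMod n, A i (i + 1) ∧ 0 < A.det ∧ A.det ≠ 0 := by
  haveI : Fact (1 < n) := ⟨by omega⟩
  have hone : (1 : ZMod n) ≠ 0 := one_ne_zero
  have hne11 : (1 : ZMod n) ≠ -1 := by
    intro h
    have h2 : ((2 : ℕ) : ZMod n) = 0 := by push_cast; linear_combination h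
    rw [ZMod.natCast_eq_zero_iff] at h2
    have := Nat.le_of_dvd (by norm_num) h2
    omega
  set e₁ : Equiv.Perm (ZMod n) := Equiv.addRight 1 with he₁
  set e₂ : Equiv.Perm (ZMod n) := Equiv.addRight (-1) with he₂
  have he12 : e₁ ≠ e₂ := by
    intro h
    have := congrFun (congrArg (fun e : Equiv.Perm (ZMod n) => (e : ZMod n → ZMod n)) h) 0
    simp only [he₁, he₂, Equiv.coe_addRight, zero_add] at this
    exact hne11 this
  -- the only permutations contributing to the determinant are the two shifts
  have hkey : ∀ σ : Equiv.Perm (ZMod n), σ ≠ e₁ → σ ≠ e₂ →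
      (∏ i : ZMod n, A (σ i) i) = 0 := by
    intro σ hσ1 hσ2
    by_contra hprod
    have hall : ∀ i : ZMod n, σ i = i + 1 ∨ σ i = i - 1 := by
      intro i
      by_contra hcon
      push_neg at hcon
      have : A (σ i) i = 0 := by
        apply hzero
        rintro (h | h)
        · exact hcon.2 (eq_sub_of_add_eq h.symm)
        · exact hcon.1 (sub_eq_iff_eq_add.mp h.symm)
      exact hprod (Finset.prod_eq_zero (Finset.mem_univ i) this)
    set S : Finset (ZMod n) := Finset.univ.filter (fun i => σ i = i + 1) with hS
    -- sum of displacements is zero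
    have hsum0 : ∑ i : ZMod n, (σ i - i) = 0 := by
      rw [Finset.sum_sub_distrib]
      rw [show ∑ i : ZMod n, σ i = ∑ i : ZMod n, i from Equiv.sum_comp σ id]
      ring
    have hsplit : ∑ i : ZMod n, (σ i - i)
        = (S.card : ZMod n) * 1 + (Sᶜ.card : ZMod n) * (-1) := by
      rw [← Finset.sum_filter_add_sum_filter_not Finset.univ (fun i => σ i = i + 1)]
      have h1 : ∑ i ∈ S, (σ i - i) = (S.card : ZMod n) * 1 := by
        rw [Finset.sum_congr rfl (fun i hi => ?_), Finset.sum_const, nsmul_eq_mul]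
        · rw [Finset.mem_filter] at hi
          rw [hi.2]; ring
      have h2 : ∑ i ∈ Sᶜ, (σ i - i) = (Sᶜ.card : ZMod n) * (-1) := by
        rw [Finset.sum_congr rfl (fun i hi => ?_), Finset.sum_const, nsmul_eq_mul]
        · rw [Finset.mem_compl, hS, Finset.mem_filter] at hi
          have : σ i = i - 1 := (hall i).resolve_left (fun h => hi ⟨Finset.mem_univ i, h⟩)
          rw [this]; ring
      rw [← h1, ← h2]
      congr 1
      · exact Finset.sum_congr (by simp [hS, Finset.compl_filter]) (fun _ _ => rfl)
    have hcards : S.card + Sᶜ.card = n := by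
      rw [Finset.card_add_card_compl]
      exact ZMod.card n
    have h2S : ((2 * S.card : ℕ) : ZMod n) = 0 := by
      have h1 : (S.card : ZMod n) - (Sᶜ.card : ZMod n) = 0 := by
        rw [hsplit] at hsum0; linear_combination hsum0
      have h2 : (S.card : ZMod n) + (Sᶜ.card : ZMod n) = 0 := by
        have := congrArg (Nat.cast : ℕ → ZMod n) hcards
        push_cast at this
        rw [this, ZMod.natCast_self]
      push_cast
      linear_combination h1 + h2
    rw [ZMod.natCast_eq_zero_iff] at h2S
    have hcop : Nat.Coprime n 2 := by
      exact hodd.coprime_two_right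
    have hdvd : n ∣ S.card := (Nat.Coprime.dvd_of_dvd_mul_left hcop h2S)
    have hle : S.card ≤ n := by
      calc S.card ≤ (Finset.univ : Finset (ZMod n)).card := Finset.card_le_card (Finset.subset_univ _)
      _ = n := by rw [Finset.card_univ, ZMod.card]
    rcases Nat.eq_zero_or_pos S.card with h0 | hpos'
    · -- S empty: σ = e₂
      apply hσ2
      ext i
      have hi : i ∉ S := by simp [Finset.card_eq_zero.mp h0]
      rw [hS, Finset.mem_filter] at hi
      have : σ i = i - 1 := (hall i).resolve_left (fun h => hi ⟨Finset.mem_univ i, h⟩)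
      simp [he₂, this, sub_eq_add_neg]
    · -- S = univ : σ = e₁
      have : S.card = n := le_antisymm hle (Nat.le_of_dvd hpos' hdvd)
      have hSuniv : S = Finset.univ := Finset.eq_univ_of_card S (by rw [this, ZMod.card])
      apply hσ1
      ext i
      have hi : i ∈ S := hSuniv ▸ Finset.mem_univ i
      rw [hS, Finset.mem_filter] at hi
      simp [he₁, hi.2]
  -- identify e₁, e₂ as cycles and compute signs
  have hcyc : e₁.IsCycle := by
    refine ⟨0, by simp [he₁, hone], fun y _ => ⟨(y.val : ℤ), ?_⟩⟩
    simp only [he₁, Equiv.zsmul_addRight, Equiv.coe_addRight, zero_add, zsmul_eq_mul,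
      mul_one]
    push_cast
    simp [ZMod.natCast_val, ZMod.cast_id]
  have hsupp : e₁.support = Finset.univ := by
    apply Finset.eq_univ_of_forall
    intro i
    rw [Equiv.Perm.mem_support]
    simp [he₁, hone]
  have hsign1 : Equiv.Perm.sign e₁ = 1 := by
    rw [hcyc.sign, hsupp, Finset.card_univ, ZMod.card, hodd.neg_one_pow]
    exact neg_neg 1
  have he2inv : e₂ = e₁⁻¹ := by
    ext i
    simp [he₁, he₂, Equiv.Perm.inv_def, sub_eq_add_neg]
  have hsign2 : Equiv.Perm.sign e₂ = 1 := by
    rw [he2inv, map_inv, hsign1, inv_one]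
  -- compute products
  set P : ℝ := ∏ i : ZMod n, A i (i + 1) with hP
  have hprod1 : (∏ i : ZMod n, A (e₁ i) i) = P := by
    apply Finset.prod_congr rfl
    intro i _
    have := congrFun (congrFun hsymm.eq i) (i + 1)
    simp only [Matrix.transpose_apply] at this
    simp [he₁, this]
  have hprod2 : (∏ i : ZMod n, A (e₂ i) i) = P := by
    have : (∏ i : ZMod n, A (e₂ i) i) = ∏ i : ZMod n, A (e₂ (e₁ i)) (e₁ i) :=
      (Equiv.prod_comp e₁ (fun i => A (e₂ i) i)).symm
    rw [this]
    apply Finset.prod_congr rfl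
    intro i _
    have h : e₂ (e₁ i) = i := by simp [he₁, he₂]
    rw [h]
    simp [he₁]
  -- the determinant
  have hdet : A.det = 2 * P := by
    rw [Matrix.det_apply]
    have hsub : ∑ σ : Equiv.Perm (ZMod n), Equiv.Perm.sign σ • ∏ i : ZMod n, A (σ i) i
        = ∑ σ ∈ ({e₁, e₂} : Finset (Equiv.Perm (ZMod n))),
            Equiv.Perm.sign σ • ∏ i : ZMod n, A (σ i) i := by
      symm
      apply Finset.sum_subset (Finset.subset_univ _)
      intro σ _ hσ
      simp only [Finset.mem_insert, Finset.mem_singleton, not_or] at hσ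
      rw [hkey σ hσ.1 hσ.2, smul_zero]
    rw [hsub, Finset.sum_pair he12, hprod1, hprod2, hsign1, hsign2]
    norm_num
    ring
  have hPpos : 0 < P := by
    apply Finset.prod_pos
    intro i _
    exact hpos i (i + 1) (Or.inl rfl)
  refine ⟨hdet, ?_, ?_⟩
  · rw [hdet]; positivity
  · rw [hdet]; positivity
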